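/- Let n ≥ 2 and d ∈ {1,…,⌊n/2⌋}. Let R₁,…,R_d be rational subspaces of ℝ^n in direct sum, and for each j let A_j ⊆ R_j be a one-dimensional subspace; set A = A₁ ⊕ ⋯ ⊕ A_d, and for J ⊆ {1,…,d} set A_J = ⊕_{j∈J} A_j. Let e ∈ {1,…,n−1} and k ∈ {1,…,min(d,e) − g(d,e,n)}. Then A is (e,k)-irrational if and only if for every subset J ⊆ {1,…,d} of cardinality k + g(d,e,n), the subspace A_J is (e, k + g(d,e,n) − g(#J,e,n))-irrational. -/

import Mathlib

noncomputable section

open Finset Module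

/-- A vector of `ℝⁿ` with integer coordinates. -/
def IsIntVec {n : ℕ} (v : EuclideanSpace ℝ (Fin n)) : Prop :=
  ∀ i, ∃ z : ℤ, v i = (z : ℝ)

/-- A rational subspace of `ℝⁿ`: one spanned by vectors with rational coordinates. -/
def IsRationalSubspace {n : ℕ} (B : Submodule ℝ (EuclideanSpace ℝ (Fin n))) : Prop :=
  ∃ s : Set (EuclideanSpace ℝ (Fin n)),
    (∀ v ∈ s, ∀ i, ∃ q : ℚ, v i = (q : ℝ)) ∧ Submodule.span ℝ s = B

/-- `A` is `(e,j)`-irrational: every rational subspace `B` of dimension `e` satisfies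
`dim (A ⊓ B) < j + g(dim A, e, n)` where `g(d,e,n) = max 0 (d+e-n)`. -/
def IsIrrational {n : ℕ} (A : Submodule ℝ (EuclideanSpace ℝ (Fin n))) (e j : ℕ) : Prop :=
  ∀ B : Submodule ℝ (EuclideanSpace ℝ (Fin n)),
    IsRationalSubspace B → finrank ℝ B = e →
      finrank ℝ ↥(A ⊓ B) < j + (finrank ℝ A + e - n)

/-- The angle `ω(X,Y) = ‖X∧Y‖ / (‖X‖·‖Y‖)`. -/
def omegaAngle {n : ℕ} (X Y : EuclideanSpace ℝ (Fin n)) : ℝ :=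
  Real.sqrt (‖X‖ ^ 2 * ‖Y‖ ^ 2 - (inner ℝ X Y : ℝ) ^ 2) / (‖X‖ * ‖Y‖)

/-- First angle `ψ₁(A,B)` between two subspaces. -/
def psiOne {n : ℕ} (A B : Submodule ℝ (EuclideanSpace ℝ (Fin n))) : ℝ :=
  sInf {t | ∃ X ∈ A, X ≠ 0 ∧ ∃ Y ∈ B, Y ≠ 0 ∧ t = omegaAngle X Y}

/-- `‖X₁ ∧ ⋯ ∧ X_e‖`, as the square root of the Gram determinant. -/
def gramNorm {n e : ℕ} (X : Fin e → EuclideanSpace ℝ (Fin n)) : ℝ :=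
  Real.sqrt (Matrix.of fun i j : Fin e => (inner ℝ (X i) (X j) : ℝ)).det

/-- `X` is a `ℤ`-basis of the lattice `B ∩ ℤⁿ`. -/
def IsZBasis {n e : ℕ} (X : Fin e → EuclideanSpace ℝ (Fin n))
    (B : Submodule ℝ (EuclideanSpace ℝ (Fin n))) : Prop :=
  (∀ i, X i ∈ B) ∧ (∀ i, IsIntVec (X i)) ∧ LinearIndependent ℝ X ∧
    ∀ v ∈ B, IsIntVec v → ∃ c : Fin e → ℤ, v = ∑ i, (c i : ℝ) • X i

/-- The height `H(B)` of a rational subspace: the common value of `‖X₁ ∧ ⋯ ∧ X_e‖`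
over `ℤ`-bases of the lattice `B ∩ ℤⁿ`. -/
def height {n : ℕ} (B : Submodule ℝ (EuclideanSpace ℝ (Fin n))) : ℝ :=
  sSup {h | ∃ e : ℕ, ∃ X : Fin e → EuclideanSpace ℝ (Fin n), IsZBasis X B ∧ h = gramNorm X}

/-- The Diophantine exponent `μ_n(A|e)₁ ∈ ℝ ∪ {+∞}`. -/
def diophExp {n : ℕ} (A : Submodule ℝ (EuclideanSpace ℝ (Fin n))) (e : ℕ) : EReal :=
  sSup {x : EReal | ∃ μ : ℝ, x = (μ : ℝ) ∧ 0 < μ ∧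
    {B : Submodule ℝ (EuclideanSpace ℝ (Fin n)) |
      IsRationalSubspace B ∧ finrank ℝ B = e ∧ psiOne A B ≤ height B ^ (-μ)}.Infinite}

namespace St11

variable {n : ℕ}

/-- cast a rational vector to a real one. -/
def cvec {n : ℕ} (x : Fin n → ℚ) : EuclideanSpace ℝ (Fin n) := WithLp.toLp 2 (fun i => (x i : ℝ))

@[simp] lemma cvec_apply (x : Fin n → ℚ) (i : Fin n) : cvec x i = (x i : ℝ) := rfl

lemma cvec_add (x y : Fin n → ℚ) : cvec (x + y) = cvec x + cvec y := by
  ext i; simp [cvec]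

lemma cvec_smul (a : ℚ) (x : Fin n → ℚ) : cvec (a • x) = (a : ℝ) • cvec x := by
  ext i; simp [cvec]

lemma cvec_zero : cvec (0 : Fin n → ℚ) = 0 := by ext i; simp [cvec]

lemma cvec_inj : Function.Injective (cvec (n := n)) := by
  intro x y h
  funext i
  have : (x i : ℝ) = (y i : ℝ) := congrArg (fun v : EuclideanSpace ℝ (Fin n) => v i) h
  exact_mod_cast this

def Phi (W : Submodule ℚ (Fin n → ℚ)) : Submodule ℝ (EuclideanSpace ℝ (Fin n)) :=
  Submodule.span ℝ (cvec '' (W : Set (Fin n → ℚ)))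

lemma Phi_mono {W W' : Submodule ℚ (Fin n → ℚ)} (h : W ≤ W') : Phi W ≤ Phi W' :=
  Submodule.span_mono (Set.image_mono h)

lemma span_cvec_span (T : Set (Fin n → ℚ)) :
    Submodule.span ℝ (cvec '' ((Submodule.span ℚ T : Submodule ℚ (Fin n → ℚ)) : Set (Fin n → ℚ)))
      = Submodule.span ℝ (cvec '' T) := by
  apply le_antisymm
  · rw [Submodule.span_le]
    rintro - ⟨x, hx, rfl⟩
    induction hx using Submodule.span_induction with
    | mem y hy => exact Submodule.subset_span ⟨y, hy, rfl⟩
    | zero => rw [cvec_zero]; exact Submodule.zero_mem _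
    | add y z _ _ hy hz => rw [cvec_add]; exact Submodule.add_mem _ hy hz
    | smul a y _ hy => rw [cvec_smul]; exact Submodule.smul_mem _ _ hy
  · exact Submodule.span_mono (Set.image_mono Submodule.subset_span)

lemma isRational_iff (B : Submodule ℝ (EuclideanSpace ℝ (Fin n))) :
    IsRationalSubspace B ↔ ∃ W : Submodule ℚ (Fin n → ℚ), Phi W = B := by
  constructor
  · rintro ⟨s, hs, rfl⟩
    refine ⟨Submodule.span ℚ {x | cvec x ∈ s}, ?_⟩
    rw [Phi, span_cvec_span]
    congr 1
    apply Set.eq_of_subset_of_subset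
    · rintro - ⟨x, hx, rfl⟩; exact hx
    · intro v hv
      have : ∃ x : Fin n → ℚ, cvec x = v := by
        refine ⟨fun i => Classical.choose (hs v hv i), ?_⟩
        ext i
        exact (Classical.choose_spec (hs v hv i)).symm
      obtain ⟨x, rfl⟩ := this
      exact ⟨x, hv, rfl⟩
  · rintro ⟨W, rfl⟩
    exact ⟨cvec '' (W : Set (Fin n → ℚ)), by rintro - ⟨x, hx, rfl⟩ i; exact ⟨x i, rfl⟩, rfl⟩


/-- ℚ-linearly independent rational vectors are ℝ-linearly independent. -/
lemma linindep_extend {r : ℕ} (v : Fin r → (Fin n → ℚ)) (hv : LinearIndependent ℚ v) :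
    LinearIndependent ℝ (fun i => cvec (v i)) := by
  classical
  -- the matrix whose columns are the `v j`
  set M : Matrix (Fin n) (Fin r) ℚ := Matrix.of (fun i j => v j i) with hM
  have hf : LinearMap.ker (Matrix.toLin' M) = ⊥ := by
    rw [LinearMap.ker_eq_bot']
    intro x hx
    refine (Fintype.linearIndependent_iff.mp hv) x ?_ |> funext
    funext l
    have := congrFun hx l
    simpa [Matrix.toLin'_apply, Matrix.mulVec, dotProduct, Finset.sum_apply,
      mul_comm, M] using this
  obtain ⟨g, hg⟩ := LinearMap.exists_leftInverse_of_injective _ hf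
  set G : Matrix (Fin r) (Fin n) ℚ := LinearMap.toMatrix' g with hG
  rw [Fintype.linearIndependent_iff]
  intro c hc i
  -- apply the real extension of row i of G
  have hrow : ∀ (w : Fin n → ℚ), (∑ l, (G i l : ℝ) * (w l : ℝ)) = ((g w i : ℚ) : ℝ) := by
    intro w
    have : g w = Matrix.toLin' G w := by rw [hG, Matrix.toLin'_toMatrix']
    rw [this]
    push_cast
    simp [Matrix.toLin'_apply, Matrix.mulVec, dotProduct]
  have hgv : ∀ j, g (v j) = Pi.single j 1 := by
    intro j
    have h1 : Matrix.toLin' M (Pi.single j 1) = v j := by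
      funext l
      simp [Matrix.toLin'_apply, Matrix.mulVec_single, M]
    have := congrFun (congrArg DFunLike.coe hg) (Pi.single j (1:ℚ))
    simpa [h1] using this
  have hc' : (∑ i, c i • (fun l => ((v i l : ℚ) : ℝ)) : Fin n → ℝ) = 0 := by
    ext l; have := congrArg (fun v : EuclideanSpace ℝ (Fin n) => v l) hc; simpa [cvec] using this
  have hcoord : ∀ l, (∑ j, c j * ((v j l : ℚ) : ℝ)) = 0 := by
    intro l
    have := congrFun hc' l
    simpa [Finset.sum_apply] using this
  have key : (∑ l, (G i l : ℝ) * (∑ j, c j * ((v j l : ℚ) : ℝ))) = 0 := by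
    simp only [hcoord, mul_zero, Finset.sum_const_zero]
  have S2 : (∑ l, (G i l : ℝ) * ∑ j, c j * ((v j l : ℚ) : ℝ))
      = ∑ j, c j * ((g (v j) i : ℚ) : ℝ) := by
    simp_rw [← hrow, Finset.mul_sum]
    rw [Finset.sum_comm]
    exact Finset.sum_congr rfl (fun j _ => Finset.sum_congr rfl (fun l _ => by ring))
  have S1 : (∑ j, c j * ((g (v j) i : ℚ) : ℝ)) = c i := by
    simp [hgv, Pi.single_apply, apply_ite ((↑·) : ℚ → ℝ)]
  rw [S2, S1] at key
  exact key


lemma Phi_finrank (W : Submodule ℚ (Fin n → ℚ)) :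
    finrank ℝ (Phi W) = finrank ℚ W := by
  classical
  set r := finrank ℚ W with hr
  let b : Basis (Fin r) ℚ W := Module.finBasis ℚ W
  set w : Fin r → (Fin n → ℚ) := fun i => (b i : Fin n → ℚ) with hw
  have hsp : Submodule.span ℚ (Set.range w) = W := by
    have : W = Submodule.map W.subtype ⊤ := by
      rw [Submodule.map_top, Submodule.range_subtype]
    rw [this, ← b.span_eq, Submodule.map_span]
    congr 1
    rw [← Set.range_comp]
    rfl
  have hind : LinearIndependent ℚ w := by
    have := b.linearIndependent.map' W.subtype W.ker_subtype
    exact this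
  have hPhi : Phi W = Submodule.span ℝ (Set.range (fun i => cvec (w i))) := by
    rw [← hsp, Phi, span_cvec_span]
    congr 1
    rw [← Set.range_comp]
    rfl
  rw [hPhi, finrank_span_eq_card (linindep_extend w hind), Fintype.card_fin]

lemma rational_sup {B₁ B₂ : Submodule ℝ (EuclideanSpace ℝ (Fin n))}
    (h₁ : IsRationalSubspace B₁) (h₂ : IsRationalSubspace B₂) :
    IsRationalSubspace (B₁ ⊔ B₂) := by
  obtain ⟨s₁, hs₁, rfl⟩ := h₁
  obtain ⟨s₂, hs₂, rfl⟩ := h₂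
  exact ⟨s₁ ∪ s₂, by rintro v (hv | hv) i; exacts [hs₁ v hv i, hs₂ v hv i],
    Submodule.span_union s₁ s₂⟩

lemma rational_bot : IsRationalSubspace (⊥ : Submodule ℝ (EuclideanSpace ℝ (Fin n))) :=
  ⟨∅, by simp, Submodule.span_empty⟩

lemma rational_top : IsRationalSubspace (⊤ : Submodule ℝ (EuclideanSpace ℝ (Fin n))) := by
  rw [isRational_iff]
  refine ⟨⊤, ?_⟩
  apply Submodule.eq_top_of_finrank_eq
  rw [Phi_finrank, finrank_top, Module.finrank_fintype_fun_eq_card,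
    finrank_euclideanSpace, Fintype.card_fin]

lemma Phi_sup (W₁ W₂ : Submodule ℚ (Fin n → ℚ)) :
    Phi (W₁ ⊔ W₂) = Phi W₁ ⊔ Phi W₂ := by
  apply le_antisymm
  · rw [Phi, Submodule.span_le]
    rintro - ⟨x, hx, rfl⟩
    obtain ⟨y, hy, z, hz, rfl⟩ := Submodule.mem_sup.mp hx
    rw [cvec_add]
    exact Submodule.add_mem _ (Submodule.mem_sup_left (Submodule.subset_span ⟨y, hy, rfl⟩))
      (Submodule.mem_sup_right (Submodule.subset_span ⟨z, hz, rfl⟩))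
  · exact sup_le (Phi_mono le_sup_left) (Phi_mono le_sup_right)

lemma Phi_inf (W₁ W₂ : Submodule ℚ (Fin n → ℚ)) :
    Phi (W₁ ⊓ W₂) = Phi W₁ ⊓ Phi W₂ := by
  have hle : Phi (W₁ ⊓ W₂) ≤ Phi W₁ ⊓ Phi W₂ :=
    le_inf (Phi_mono inf_le_left) (Phi_mono inf_le_right)
  refine Submodule.eq_of_le_of_finrank_le hle ?_
  have e₁ := Submodule.finrank_sup_add_finrank_inf_eq (Phi W₁) (Phi W₂)
  have e₂ := Submodule.finrank_sup_add_finrank_inf_eq W₁ W₂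
  have e₃ : Phi W₁ ⊔ Phi W₂ = Phi (W₁ ⊔ W₂) := (Phi_sup W₁ W₂).symm
  rw [e₃, Phi_finrank, Phi_finrank, Phi_finrank] at e₁
  rw [Phi_finrank]
  omega

lemma rational_inf {B₁ B₂ : Submodule ℝ (EuclideanSpace ℝ (Fin n))}
    (h₁ : IsRationalSubspace B₁) (h₂ : IsRationalSubspace B₂) :
    IsRationalSubspace (B₁ ⊓ B₂) := by
  rw [isRational_iff] at h₁ h₂ ⊢
  obtain ⟨W₁, rfl⟩ := h₁
  obtain ⟨W₂, rfl⟩ := h₂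
  exact ⟨W₁ ⊓ W₂, Phi_inf W₁ W₂⟩

/-- generic: enlarge a submodule to any intermediate dimension. -/
lemma exists_between {K M : Type*} [Field K] [AddCommGroup M] [Module K M]
    [FiniteDimensional K M] :
    ∀ (dlt : ℕ) (U X : Submodule K M), U ≤ X → finrank K U + dlt ≤ finrank K X →
      ∃ C, U ≤ C ∧ C ≤ X ∧ finrank K C = finrank K U + dlt := by
  intro dlt
  induction dlt with
  | zero => exact fun U X hUX _ => ⟨U, le_refl U, hUX, by omega⟩
  | succ dd ih =>
    intro U X hUX hcard
    have hne : U ≠ X := by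
      intro h; subst h; omega
    obtain ⟨x, hxX, hxU⟩ := SetLike.exists_of_lt (lt_of_le_of_ne hUX hne)
    have hx0 : x ≠ 0 := fun h => hxU (h ▸ U.zero_mem)
    have hdisj : U ⊓ (Submodule.span K {x}) = ⊥ := by
      rw [← disjoint_iff]
      exact (Submodule.disjoint_span_singleton).mpr (fun h => absurd h hxU)
    have hrk : finrank K ↥(U ⊔ Submodule.span K {x}) = finrank K U + 1 := by
      have := Submodule.finrank_sup_add_finrank_inf_eq U (Submodule.span K {x})
      rw [hdisj, finrank_bot, finrank_span_singleton hx0] at this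
      omega
    obtain ⟨C, hC1, hC2, hC3⟩ := ih (U ⊔ Submodule.span K {x}) X
      (sup_le hUX ((Submodule.span_le).mpr (Set.singleton_subset_iff.mpr hxX))) (by omega)
    exact ⟨C, le_trans le_sup_left hC1, hC2, by omega⟩

/-- extend a rational subspace to a rational subspace of any larger dimension `≤ n`. -/
lemma rational_extend {U : Submodule ℝ (EuclideanSpace ℝ (Fin n))} (hU : IsRationalSubspace U)
    {e : ℕ} (h1 : finrank ℝ U ≤ e) (h2 : e ≤ n) :
    ∃ B, IsRationalSubspace B ∧ U ≤ B ∧ finrank ℝ B = e := by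
  rw [isRational_iff] at hU
  obtain ⟨W, rfl⟩ := hU
  rw [Phi_finrank] at h1
  obtain ⟨W', hW'1, _, hW'3⟩ := exists_between (e - finrank ℚ W) W ⊤ le_top
    (by rw [finrank_top, Module.finrank_fintype_fun_eq_card, Fintype.card_fin]; omega)
  refine ⟨Phi W', (isRational_iff _).mpr ⟨W', rfl⟩, Phi_mono hW'1, ?_⟩
  rw [Phi_finrank]
  omega


lemma ext_cvec (q : (Fin n → ℚ) →ₗ[ℚ] (Fin n → ℚ)) (x : Fin n → ℚ) :
    Matrix.toEuclideanLin ((LinearMap.toMatrix' q).map ((↑·) : ℚ → ℝ)) (cvec x) = cvec (q x) := by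
  have hq : q x = (LinearMap.toMatrix' q).mulVec x := by
    rw [← Matrix.toLin'_apply, Matrix.toLin'_toMatrix']
  ext i
  rw [hq]
  simp [Matrix.toLin'_apply, Matrix.mulVec, dotProduct, cvec]

lemma decomp (v : EuclideanSpace ℝ (Fin n)) : v = ∑ i, v i • cvec (Pi.single i 1) := by
  have h : ∀ j, (∑ i, v i • (fun l => (((Pi.single i 1 : Fin n → ℚ)) l : ℝ)) : Fin n → ℝ) j
      = v j := by
    intro j
    rw [Finset.sum_apply]
    simp [Pi.single_apply, apply_ite ((↑·) : ℚ → ℝ)]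
  ext j
  rw [← h j]
  simp [cvec, Finset.sum_apply]

lemma exists_proj {E : Submodule ℝ (EuclideanSpace ℝ (Fin n))} (hE : IsRationalSubspace E) :
    ∃ p : (EuclideanSpace ℝ (Fin n)) →ₗ[ℝ] (EuclideanSpace ℝ (Fin n)),
      LinearMap.ker p = E ∧ (∀ x, p (p x) = p x) ∧
      (∀ B, IsRationalSubspace B → IsRationalSubspace (Submodule.map p B)) := by
  rw [isRational_iff] at hE
  obtain ⟨W, rfl⟩ := hE
  obtain ⟨W', hWc⟩ := Submodule.exists_isCompl W
  set q' : (Fin n → ℚ) →ₗ[ℚ] (Fin n → ℚ) :=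
    W.subtype ∘ₗ (Submodule.projectionOnto W W' hWc) with hq'
  set q : (Fin n → ℚ) →ₗ[ℚ] (Fin n → ℚ) := LinearMap.id - q' with hqdef
  set p : (EuclideanSpace ℝ (Fin n)) →ₗ[ℝ] (EuclideanSpace ℝ (Fin n)) :=
    Matrix.toEuclideanLin ((LinearMap.toMatrix' q).map ((↑·) : ℚ → ℝ)) with hpdef
  set p' : (EuclideanSpace ℝ (Fin n)) →ₗ[ℝ] (EuclideanSpace ℝ (Fin n)) :=
    Matrix.toEuclideanLin ((LinearMap.toMatrix' q').map ((↑·) : ℚ → ℝ)) with hp'def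
  have hpc : ∀ x : Fin n → ℚ, p (cvec x) = cvec (q x) := fun x => ext_cvec q x
  have hp'c : ∀ x : Fin n → ℚ, p' (cvec x) = cvec (q' x) := fun x => ext_cvec q' x
  have hq'W : ∀ x : Fin n → ℚ, q' x ∈ W := fun x => (Submodule.projectionOnto W W' hWc x).2
  have hsum : ∀ v, p v + p' v = v := by
    intro v
    have hm : (LinearMap.toMatrix' q).map ((↑·) : ℚ → ℝ)
        + (LinearMap.toMatrix' q').map ((↑·) : ℚ → ℝ) = 1 := by
      rw [← Matrix.map_add _ (fun a b => by push_cast; ring)]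
      have : q + q' = LinearMap.id := by rw [hqdef]; abel
      rw [← map_add, this, LinearMap.toMatrix'_id]
      exact Matrix.map_one _ (by norm_num) (by norm_num)
    calc p v + p' v
        = Matrix.toEuclideanLin ((LinearMap.toMatrix' q).map ((↑·) : ℚ → ℝ)
            + (LinearMap.toMatrix' q').map ((↑·) : ℚ → ℝ)) v := by
          rw [map_add]; rfl
      _ = Matrix.toEuclideanLin 1 v := by rw [hm]
      _ = v := by ext i; simp [Matrix.toEuclideanLin_apply]
  have hrange' : ∀ v, p' v ∈ Phi W := by
    intro v
    rw [decomp v, map_sum]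
    apply Submodule.sum_mem
    intro i _
    rw [map_smul]
    refine Submodule.smul_mem _ _ ?_
    rw [hp'c]
    exact Submodule.subset_span ⟨q' (Pi.single i 1), hq'W _, rfl⟩
  have hker : LinearMap.ker p = Phi W := by
    apply le_antisymm
    · intro v hv
      have h0 : p v = 0 := hv
      have := hsum v
      rw [h0, zero_add] at this
      rw [← this]
      exact hrange' v
    · rw [Phi, Submodule.span_le]
      rintro - ⟨x, hx, rfl⟩
      have : q x = 0 := by
        rw [hqdef]
        simp only [LinearMap.sub_apply, LinearMap.id_apply, hq']
        rw [LinearMap.comp_apply]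
        rw [Submodule.projectionOnto_apply_left hWc ⟨x, hx⟩]
        simp
      simp only [SetLike.mem_coe, LinearMap.mem_ker]
      rw [hpc, this, cvec_zero]
  have hidem : ∀ v, p (p v) = p v := by
    intro v
    have h0 : p (p' v) = 0 := by
      have hm : p' v ∈ LinearMap.ker p := hker.symm ▸ hrange' v
      exact hm
    have h1 : p v = v - p' v := eq_sub_of_add_eq (hsum v)
    conv_lhs => rw [h1]
    rw [map_sub, h0, sub_zero]
  refine ⟨p, hker, hidem, ?_⟩
  intro B hB
  obtain ⟨s, hs, rfl⟩ := hB
  rw [Submodule.map_span]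
  refine ⟨p '' s, ?_, rfl⟩
  rintro - ⟨v, hv, rfl⟩
  obtain ⟨x, rfl⟩ : ∃ x, v = cvec x := by
    refine ⟨fun i => Classical.choose (hs v hv i), ?_⟩
    ext i
    exact Classical.choose_spec (hs v hv i)
  rw [hpc]
  intro i
  exact ⟨q x i, rfl⟩


section Helpers

variable {ι : Type*} [DecidableEq ι]

lemma finrank_map_add_inf_ker (p : EuclideanSpace ℝ (Fin n) →ₗ[ℝ] EuclideanSpace ℝ (Fin n))
    (U : Submodule ℝ (EuclideanSpace ℝ (Fin n))) :
    finrank ℝ (Submodule.map p U) + finrank ℝ ↥(U ⊓ LinearMap.ker p) = finrank ℝ U := by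
  have h := LinearMap.finrank_range_add_finrank_ker (p ∘ₗ U.subtype)
  rw [LinearMap.range_comp, Submodule.range_subtype, LinearMap.ker_comp] at h
  have h2 : finrank ℝ ↥(Submodule.comap U.subtype (LinearMap.ker p))
      = finrank ℝ ↥(U ⊓ LinearMap.ker p) := by
    rw [← Submodule.map_comap_subtype]
    exact ((Submodule.equivMapOfInjective U.subtype (Submodule.injective_subtype U)
      _).finrank_eq)
  rw [h2] at h
  exact h

lemma finrank_map_le' (p : EuclideanSpace ℝ (Fin n) →ₗ[ℝ] EuclideanSpace ℝ (Fin n))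
    (U : Submodule ℝ (EuclideanSpace ℝ (Fin n))) :
    finrank ℝ (Submodule.map p U) ≤ finrank ℝ U := by
  have := finrank_map_add_inf_ker p U; omega

lemma finrank_map_eq_of_disjoint
    {p : EuclideanSpace ℝ (Fin n) →ₗ[ℝ] EuclideanSpace ℝ (Fin n)}
    {U : Submodule ℝ (EuclideanSpace ℝ (Fin n))} (h : U ⊓ LinearMap.ker p = ⊥) :
    finrank ℝ (Submodule.map p U) = finrank ℝ U := by
  have := finrank_map_add_inf_ker p U
  rw [h, finrank_bot] at this
  omega

lemma map_finset_sup (p : EuclideanSpace ℝ (Fin n) →ₗ[ℝ] EuclideanSpace ℝ (Fin n))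
    (S : Finset ι) (f : ι → Submodule ℝ (EuclideanSpace ℝ (Fin n))) :
    Submodule.map p (S.sup f) = S.sup (fun j => Submodule.map p (f j)) := by
  induction S using Finset.cons_induction with
  | empty => simp
  | cons a s ha ih => rw [Finset.sup_cons, Finset.sup_cons, Submodule.map_sup, ih]

lemma map_inf_of_le_disjoint
    {p : EuclideanSpace ℝ (Fin n) →ₗ[ℝ] EuclideanSpace ℝ (Fin n)}
    {U U' T : Submodule ℝ (EuclideanSpace ℝ (Fin n))} (hU : U ≤ T) (hU' : U' ≤ T)
    (hT : T ⊓ LinearMap.ker p = ⊥) :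
    Submodule.map p U ⊓ Submodule.map p U' = Submodule.map p (U ⊓ U') := by
  apply le_antisymm
  · intro x hx
    obtain ⟨⟨u, hu, hux⟩, ⟨u', hu', hux'⟩⟩ := hx
    have hk : u - u' ∈ T ⊓ LinearMap.ker p := by
      refine ⟨sub_mem (hU hu) (hU' hu'), ?_⟩
      simp only [SetLike.mem_coe, LinearMap.mem_ker, map_sub, hux, hux', sub_self]
    rw [hT] at hk
    have huu' : u = u' := by
      have : u - u' = 0 := hk
      exact sub_eq_zero.mp this
    exact ⟨u, ⟨hu, huu' ▸ hu'⟩, hux⟩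
  · exact le_inf (Submodule.map_mono inf_le_left) (Submodule.map_mono inf_le_right)

lemma erase_sup_inf_of_iSupIndep {f : ι → Submodule ℝ (EuclideanSpace ℝ (Fin n))}
    (h : iSupIndep f) (S : Finset ι) (j : ι) :
    ((S.erase j).sup f) ⊓ f j = ⊥ := by
  have hle : (S.erase j).sup f ≤ ⨆ i, ⨆ _ : i ≠ j, f i := by
    apply Finset.sup_le
    intro i hi
    exact le_iSup_of_le i (le_iSup_of_le (Finset.ne_of_mem_erase hi) le_rfl)
  exact disjoint_iff.mp (((h j).mono_right hle).symm)

lemma finrank_finset_sup_eq_sum (f : ι → Submodule ℝ (EuclideanSpace ℝ (Fin n)))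
    (S : Finset ι) (h : ∀ j ∈ S, ((S.erase j).sup f) ⊓ f j = ⊥) :
    finrank ℝ ↥(S.sup f) = ∑ j ∈ S, finrank ℝ ↥(f j) := by
  induction S using Finset.cons_induction with
  | empty => simp [finrank_bot]
  | cons a s ha ih =>
    have hdisj : (s.sup f) ⊓ f a = ⊥ := by
      have := h a (Finset.mem_cons_self a s)
      rwa [Finset.erase_cons] at this
    have hsum := Submodule.finrank_sup_add_finrank_inf_eq (f a) (s.sup f)
    rw [inf_comm, hdisj, finrank_bot] at hsum
    rw [Finset.sup_cons, Finset.sum_cons, ← ih (fun j hj => ?_)]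
    · omega
    · have hsub : s.erase j ⊆ (Finset.cons a s ha).erase j :=
        Finset.erase_subset_erase j (Finset.subset_cons ha)
      have := h j (Finset.mem_cons_of_mem hj)
      exact le_bot_iff.mp (le_trans (inf_le_inf_right _ (Finset.sup_mono hsub)) this.le)

lemma rational_finset_sup (f : ι → Submodule ℝ (EuclideanSpace ℝ (Fin n)))
    (S : Finset ι) (h : ∀ j ∈ S, IsRationalSubspace (f j)) :
    IsRationalSubspace (S.sup f) := by
  induction S using Finset.cons_induction with
  | empty => simpa using rational_bot
  | cons a s ha ih =>
    rw [Finset.sup_cons]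
    exact rational_sup (h a (Finset.mem_cons_self a s))
      (ih (fun j hj => h j (Finset.mem_cons_of_mem hj)))

lemma finrank_finset_sup_le (f : ι → Submodule ℝ (EuclideanSpace ℝ (Fin n))) (S : Finset ι) :
    finrank ℝ ↥(S.sup f) ≤ ∑ j ∈ S, finrank ℝ ↥(f j) := by
  induction S using Finset.cons_induction with
  | empty => simp [finrank_bot]
  | cons a s ha ih =>
    rw [Finset.sup_cons, Finset.sum_cons]
    exact le_trans (Submodule.finrank_add_le_finrank_add_finrank _ _) (by omega)

lemma exists_minimal_rational (U : Submodule ℝ (EuclideanSpace ℝ (Fin n))) :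
    ∃ E, IsRationalSubspace E ∧ U ≤ E ∧ ∀ B, IsRationalSubspace B → U ≤ B → E ≤ B := by
  classical
  have hex : ∃ m, ∃ B, IsRationalSubspace B ∧ U ≤ B ∧ finrank ℝ B = m :=
    ⟨_, ⊤, rational_top, le_top, rfl⟩
  obtain ⟨E, hE, hUE, hrk⟩ := Nat.find_spec hex
  refine ⟨E, hE, hUE, ?_⟩
  intro B hB hUB
  have h1 : Nat.find hex ≤ finrank ℝ ↥(E ⊓ B) :=
    Nat.find_min' hex ⟨E ⊓ B, rational_inf hE hB, le_inf hUE hUB, rfl⟩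
  have h2 : E ⊓ B = E :=
    Submodule.eq_of_le_of_finrank_le inf_le_left (by omega)
  rw [← h2]
  exact inf_le_right

end Helpers


section Main

variable {ι : Type*} [DecidableEq ι]

lemma main_lemma (N : ℕ) :
    ∀ (S : Finset ι) (E A : ι → Submodule ℝ (EuclideanSpace ℝ (Fin n)))
      (C W : Submodule ℝ (EuclideanSpace ℝ (Fin n))),
      S.card ≤ N →
      (∀ j ∈ S, IsRationalSubspace (E j)) →
      (∀ j ∈ S, A j ≤ E j) →
      (∀ j ∈ S, finrank ℝ ↥(A j) = 1) →
      (∀ j ∈ S, ∀ B, IsRationalSubspace B → A j ≤ B → B ≤ E j → B = E j) →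
      (∀ j ∈ S, ((S.erase j).sup E) ⊓ E j = ⊥) →
      C ≤ S.sup A → IsRationalSubspace W → C ≤ W →
      ∃ J ⊆ S, J.card = finrank ℝ ↥C ∧ (∑ j ∈ J, finrank ℝ ↥(E j)) ≤ finrank ℝ ↥W := by
  induction N with
  | zero =>
    intro S E A C W hcard _ _ _ _ _ hCA _ _
    rw [Nat.le_zero, Finset.card_eq_zero] at hcard
    subst hcard
    have hC : C = ⊥ := le_bot_iff.mp (by simpa using hCA)
    subst hC
    exact ⟨∅, Finset.empty_subset _, by simp [finrank_bot], by simp⟩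
  | succ N ih =>
    intro S E A C W hcard hErat hAE hA1 hmin hD hCA hWrat hCW
    rcases S.eq_empty_or_nonempty with rfl | ⟨j₀, hj₀⟩
    · have hC : C = ⊥ := le_bot_iff.mp (by simpa using hCA)
      subst hC
      exact ⟨∅, Finset.empty_subset _, by simp [finrank_bot], by simp⟩
    obtain ⟨p, hker, hidem, hprat⟩ := exists_proj (hErat j₀ hj₀)
    set S' : Finset ι := S.erase j₀ with hS'
    set E' : ι → Submodule ℝ (EuclideanSpace ℝ (Fin n)) :=
      fun j => Submodule.map p (E j) with hE'
    set A' : ι → Submodule ℝ (EuclideanSpace ℝ (Fin n)) :=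
      fun j => Submodule.map p (A j) with hA'
    set C' : Submodule ℝ (EuclideanSpace ℝ (Fin n)) := Submodule.map p C with hC'
    set W' : Submodule ℝ (EuclideanSpace ℝ (Fin n)) := Submodule.map p W with hW'
    have hDj₀ : (S'.sup E) ⊓ E j₀ = ⊥ := hD j₀ hj₀
    have hsupker : (S'.sup E) ⊓ LinearMap.ker p = ⊥ := by rw [hker]; exact hDj₀
    have hkerE : ∀ j ∈ S', E j ⊓ LinearMap.ker p = ⊥ := by
      intro j hj
      rw [hker]
      exact le_bot_iff.mp (le_trans (inf_le_inf_right _ (Finset.le_sup hj)) hDj₀.le)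
    have hmapEj₀ : Submodule.map p (E j₀) = ⊥ := by
      rw [le_bot_iff.symm]
      rintro - ⟨x, hx, rfl⟩
      have : x ∈ LinearMap.ker p := hker.symm ▸ hx
      simpa using this
    have hE'rat : ∀ j ∈ S', IsRationalSubspace (E' j) :=
      fun j hj => hprat _ (hErat j (Finset.mem_of_mem_erase hj))
    have hA'E' : ∀ j ∈ S', A' j ≤ E' j :=
      fun j hj => Submodule.map_mono (hAE j (Finset.mem_of_mem_erase hj))
    have hA'1 : ∀ j ∈ S', finrank ℝ ↥(A' j) = 1 := by
      intro j hj
      have hd : A j ⊓ LinearMap.ker p = ⊥ :=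
        le_bot_iff.mp (le_trans (inf_le_inf_right _ (hAE j (Finset.mem_of_mem_erase hj)))
          (hkerE j hj).le)
      rw [hA', finrank_map_eq_of_disjoint hd]
      exact hA1 j (Finset.mem_of_mem_erase hj)
    have hsupAj₀ : (S.sup A) ⊓ E j₀ ≤ A j₀ := by
      have h1 : S.sup A ≤ A j₀ ⊔ S'.sup A := by
        rw [← Finset.sup_insert, Finset.insert_erase hj₀]
      have h2 : S'.sup A ⊓ E j₀ = ⊥ := by
        refine le_bot_iff.mp (le_trans (inf_le_inf_right _ ?_) hDj₀.le)
        exact Finset.sup_mono_fun (fun j hj => hAE j (Finset.mem_of_mem_erase hj))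
      calc S.sup A ⊓ E j₀ ≤ (A j₀ ⊔ S'.sup A) ⊓ E j₀ := inf_le_inf_right _ h1
        _ = A j₀ ⊔ (S'.sup A ⊓ E j₀) := sup_inf_assoc_of_le _ (hAE j₀ hj₀)
        _ = A j₀ := by rw [h2, sup_bot_eq]
    have hCint : C ⊓ E j₀ ≤ A j₀ := le_trans (inf_le_inf_right _ hCA) hsupAj₀
    have hmin' : ∀ j ∈ S', ∀ B, IsRationalSubspace B → A' j ≤ B → B ≤ E' j → B = E' j := by
      intro j hj B hBrat hAB hBE
      have hjS : j ∈ S := Finset.mem_of_mem_erase hj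
      have hpfix : ∀ b ∈ E' j, p b = b := by
        rintro b ⟨x, hx, rfl⟩
        exact hidem x
      have hBt : (B ⊔ E j₀) ⊓ E j = E j := by
        refine hmin j hjS _ (rational_inf (rational_sup hBrat (hErat j₀ hj₀)) (hErat j hjS))
          ?_ inf_le_right
        intro a ha
        refine ⟨?_, hAE j hjS ha⟩
        have hpa : p a ∈ B := hAB ⟨a, ha, rfl⟩
        have hsub : a - p a ∈ E j₀ := by
          rw [← hker]
          simp [LinearMap.mem_ker, map_sub, hidem]
        have hdec : a = p a + (a - p a) := by abel
        rw [hdec]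
        exact Submodule.add_mem _ (Submodule.mem_sup_left hpa) (Submodule.mem_sup_right hsub)
      have hEle : E j ≤ B ⊔ E j₀ := by rw [← hBt]; exact inf_le_left
      have hmapB : Submodule.map p B = B := by
        apply le_antisymm
        · rintro - ⟨b, hb, rfl⟩
          rw [hpfix b (hBE hb)]
          exact hb
        · intro b hb
          exact ⟨b, hb, hpfix b (hBE hb)⟩
      have hfin : E' j ≤ B := by
        calc E' j = Submodule.map p (E j) := rfl
          _ ≤ Submodule.map p (B ⊔ E j₀) := Submodule.map_mono hEle
          _ = Submodule.map p B ⊔ Submodule.map p (E j₀) := Submodule.map_sup _ _ _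
          _ = B := by rw [hmapB, hmapEj₀, sup_bot_eq]
      exact le_antisymm hBE hfin
    have hD' : ∀ j ∈ S', ((S'.erase j).sup E') ⊓ E' j = ⊥ := by
      intro j hj
      have h1 : (S'.erase j).sup E' = Submodule.map p ((S'.erase j).sup E) :=
        (map_finset_sup p _ E).symm
      have h2 : (S'.erase j).sup E ⊓ E j = ⊥ := by
        refine le_bot_iff.mp (le_trans (inf_le_inf_right _ (Finset.sup_mono ?_))
          (hD j (Finset.mem_of_mem_erase hj)).le)
        exact Finset.erase_subset_erase _ (Finset.erase_subset _ _)
      rw [h1, hE', map_inf_of_le_disjoint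
        (Finset.sup_le (fun i hi => Finset.le_sup (Finset.mem_of_mem_erase hi)))
        (Finset.le_sup hj) hsupker, h2, Submodule.map_bot]
    have hC'A' : C' ≤ S'.sup A' := by
      have h3 : Submodule.map p (A j₀) = ⊥ := by
        rw [le_bot_iff.symm]
        rintro - ⟨a, ha, rfl⟩
        have : a ∈ LinearMap.ker p := hker.symm ▸ (hAE j₀ hj₀ ha)
        simpa using this
      calc C' ≤ Submodule.map p (S.sup A) := Submodule.map_mono hCA
        _ = S.sup (fun j => Submodule.map p (A j)) := map_finset_sup p _ A
        _ = Submodule.map p (A j₀) ⊔ S'.sup (fun j => Submodule.map p (A j)) := by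
            rw [show S = insert j₀ S' from (Finset.insert_erase hj₀).symm, Finset.sup_insert]
        _ = S'.sup A' := by rw [h3, bot_sup_eq]
    have hcard' : S'.card ≤ N := by
      rw [hS', Finset.card_erase_of_mem hj₀]
      have : 1 ≤ S.card := Finset.card_pos.mpr ⟨j₀, hj₀⟩
      omega
    obtain ⟨J', hJ'sub, hJ'card, hJ'sum⟩ := ih S' E' A' C' W' hcard' hE'rat hA'E' hA'1
      hmin' hD' hC'A' (hprat W hWrat) (Submodule.map_mono hCW)
    have hEsum : (∑ j ∈ J', finrank ℝ ↥(E j)) = ∑ j ∈ J', finrank ℝ ↥(E' j) := by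
      refine Finset.sum_congr rfl (fun j hj => ?_)
      rw [hE', finrank_map_eq_of_disjoint (hkerE j (hJ'sub hj))]
    by_cases hbot : C ⊓ E j₀ = ⊥
    · have hrkC : finrank ℝ ↥C' = finrank ℝ ↥C :=
        finrank_map_eq_of_disjoint (by rw [hker]; exact hbot)
      refine ⟨J', le_trans hJ'sub (Finset.erase_subset _ _), by rw [hJ'card, hrkC], ?_⟩
      calc (∑ j ∈ J', finrank ℝ ↥(E j)) = ∑ j ∈ J', finrank ℝ ↥(E' j) := hEsum
        _ ≤ finrank ℝ ↥W' := hJ'sum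
        _ ≤ finrank ℝ ↥W := finrank_map_le' p W
    · have hCE : C ⊓ E j₀ = A j₀ := by
        refine Submodule.eq_of_le_of_finrank_le hCint ?_
        rw [hA1 j₀ hj₀]
        have : finrank ℝ ↥(C ⊓ E j₀) ≠ 0 :=
          fun h0 => hbot (Submodule.finrank_eq_zero.mp h0)
        omega
      have hAC : A j₀ ≤ C := hCE ▸ inf_le_left
      have hEj₀W : E j₀ ≤ W := by
        have h4 := hmin j₀ hj₀ (W ⊓ E j₀) (rational_inf hWrat (hErat j₀ hj₀))
          (le_inf (le_trans hAC hCW) (hAE j₀ hj₀)) inf_le_right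
        rw [← h4]
        exact inf_le_left
      have hrkW : finrank ℝ ↥W' + finrank ℝ ↥(E j₀) = finrank ℝ ↥W := by
        have h5 := finrank_map_add_inf_ker p W
        rw [hker, inf_eq_right.mpr hEj₀W] at h5
        exact h5
      have hrkC : finrank ℝ ↥C' + 1 = finrank ℝ ↥C := by
        have h6 := finrank_map_add_inf_ker p C
        rw [hker, hCE, hA1 j₀ hj₀] at h6
        exact h6
      have hj₀J' : j₀ ∉ J' := fun h => (Finset.notMem_erase j₀ S) (hJ'sub h)
      refine ⟨insert j₀ J', Finset.insert_subset hj₀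
        (le_trans hJ'sub (Finset.erase_subset _ _)), ?_, ?_⟩
      · rw [Finset.card_insert_of_notMem hj₀J', hJ'card]
        omega
      · rw [Finset.sum_insert hj₀J']
        have h7 : (∑ j ∈ J', finrank ℝ ↥(E j)) ≤ finrank ℝ ↥W' := hEsum ▸ hJ'sum
        omega

end Main

end St11

open St11

/-- Let `R₁,…,R_d` be rational subspaces of `ℝⁿ` in direct sum, `A_j ⊆ R_j`
lines, `A = ⊕ A_j`, `A_J = ⊕_{j∈J} A_j`. For `e ∈ {1,…,n−1}` and
`k ∈ {1,…,min(d,e) − g(d,e,n)}`: `A` is `(e,k)`-irrational iff for every `J` of cardinality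
`k + g(d,e,n)`, `A_J` is `(e, k + g(d,e,n) − g(#J,e,n))`-irrational. -/
theorem statement11 (n d : ℕ) (hn : 2 ≤ n) (hd1 : 1 ≤ d) (hd2 : d ≤ n / 2)
    (R : Fin d → Submodule ℝ (EuclideanSpace ℝ (Fin n)))
    (hRrat : ∀ j, IsRationalSubspace (R j))
    (hRindep : iSupIndep R)
    (A : Fin d → Submodule ℝ (EuclideanSpace ℝ (Fin n)))
    (hAR : ∀ j, A j ≤ R j) (hA1 : ∀ j, finrank ℝ (A j) = 1)
    (e k : ℕ) (he1 : 1 ≤ e) (he2 : e ≤ n - 1)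
    (hk1 : 1 ≤ k) (hk2 : k ≤ min d e - (d + e - n)) :
    IsIrrational (⨆ j, A j) e k ↔
      ∀ J : Finset (Fin d), J.card = k + (d + e - n) →
        IsIrrational (⨆ j ∈ J, A j) e (k + (d + e - n) - (J.card + e - n)) := by

  classical
  have hAind : iSupIndep A := hRindep.mono (fun j => hAR j)
  have hDA : ∀ (S : Finset (Fin d)), ∀ j ∈ S, ((S.erase j).sup A) ⊓ A j = ⊥ :=
    fun S j _ => erase_sup_inf_of_iSupIndep hAind S j
  have hsupA : (⨆ j, A j) = Finset.univ.sup A := (Finset.sup_univ_eq_iSup A).symm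
  have hJsup : ∀ J : Finset (Fin d), (⨆ j ∈ J, A j) = J.sup A :=
    fun J => (Finset.sup_eq_iSup J A).symm
  have hrkAJ : ∀ J : Finset (Fin d), finrank ℝ ↥(J.sup A) = J.card := by
    intro J
    rw [finrank_finset_sup_eq_sum A J (hDA J)]
    simp [hA1]
  have hrkA : finrank ℝ ↥(⨆ j, A j) = d := by
    rw [hsupA, hrkAJ Finset.univ, Finset.card_univ, Fintype.card_fin]
  constructor
  · intro h J hJ B hB hBe
    have h1 := h B hB hBe
    rw [hrkA] at h1
    have h2 : finrank ℝ ↥((⨆ j ∈ J, A j) ⊓ B) ≤ finrank ℝ ↥((⨆ j, A j) ⊓ B) := by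
      apply Submodule.finrank_mono
      apply inf_le_inf_right
      rw [hJsup J, hsupA]
      exact Finset.sup_mono (Finset.subset_univ J)
    rw [hJsup J] at h2 ⊢
    rw [hrkAJ J, hJ]
    omega
  · intro h B hB hBe
    by_contra hcon
    push_neg at hcon
    rw [hrkA] at hcon
    set m : ℕ := k + (d + e - n) with hm
    obtain ⟨C, -, hCle, hCrk⟩ := exists_between m ⊥ ((⨆ j, A j) ⊓ B) bot_le
      (by rw [finrank_bot]; omega)
    rw [finrank_bot] at hCrk
    have hEex : ∀ j, ∃ E, IsRationalSubspace E ∧ A j ≤ E ∧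
        ∀ B', IsRationalSubspace B' → A j ≤ B' → E ≤ B' :=
      fun j => exists_minimal_rational (A j)
    choose E hErat hAE hminU using hEex
    have hER : ∀ j, E j ≤ R j := fun j => hminU j (R j) (hRrat j) (hAR j)
    have hEind : iSupIndep E := hRindep.mono (fun j => hER j)
    obtain ⟨J, hJsub, hJcard, hJsum⟩ := main_lemma d Finset.univ E A C B
      (by rw [Finset.card_univ, Fintype.card_fin])
      (fun j _ => hErat j) (fun j _ => hAE j) (fun j _ => hA1 j)
      (fun j _ B' hB'rat hAB' hB'E => le_antisymm hB'E (hminU j B' hB'rat hAB'))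
      (fun j _ => erase_sup_inf_of_iSupIndep hEind Finset.univ j)
      (le_trans hCle (le_trans inf_le_left (le_of_eq hsupA)))
      hB (le_trans hCle inf_le_right)
    rw [hCrk] at hJcard
    rw [hBe] at hJsum
    have hrkB0 : finrank ℝ ↥(J.sup E) ≤ e :=
      le_trans (finrank_finset_sup_le E J) hJsum
    obtain ⟨Bt, hBtrat, hBtle, hBtrk⟩ := rational_extend (rational_finset_sup E J
      (fun j _ => hErat j)) hrkB0 (by omega)
    have hAJB : J.sup A ≤ Bt :=
      le_trans (Finset.sup_mono_fun (fun j _ => hAE j)) hBtle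
    have hspec := h J (by omega) Bt hBtrat hBtrk
    rw [hJsup J, hrkAJ J, inf_eq_left.mpr hAJB, hrkAJ J] at hspec
    omega
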